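/- For every n ≥ 1 and every probability distribution μ on (0,∞), at least one of the n schedules X_j = (2^{i-j/n})_{i∈ℤ}, j = 0,...,n-1, satisfies E_{z∼μ}[z] / E_{z∼μ}[ℓ(X_j, z)] ≤ 4n(2^{1/n} - 1). -/

import Mathlib

open MeasureTheory Finset

/-- `ell lam T` is the length of the largest contract of the schedule
`X(λ) = (2^{i-λ})_{i∈ℤ}` completed by time `T`; contract `i` completes at time
`2^{i+1-λ}`.  The schedule `X_j = (2^{i-j/n})_{i∈ℤ}` is `X(j/n)`. -/
noncomputable def ell (lam T : ℝ) : ℝ :=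
  (2 : ℝ) ^ (((⌊Real.logb 2 T - 1 + lam⌋ : ℤ) : ℝ) - lam)

lemma ell_eq (lam T : ℝ) (hT : 0 < T) :
    ell lam T = (T / 2) * (2 : ℝ) ^ (-(Int.fract (Real.logb 2 T - 1 + lam))) := by
  have h1 : ((⌊Real.logb 2 T - 1 + lam⌋ : ℤ) : ℝ) - lam
      = (Real.logb 2 T - 1) - Int.fract (Real.logb 2 T - 1 + lam) := by
    rw [Int.fract]; ring
  rw [ell, h1, sub_eq_add_neg, Real.rpow_add (by norm_num : (0:ℝ) < 2),
    Real.rpow_sub (by norm_num : (0:ℝ) < 2),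
    Real.rpow_logb (by norm_num) (by norm_num) hT, Real.rpow_one]

lemma ell_meas (lam : ℝ) : Measurable (ell lam) := by
  have h : Measurable fun T : ℝ => Real.logb 2 T - 1 + lam := by
    unfold Real.logb
    exact ((Real.measurable_log.div_const _).sub measurable_const).add measurable_const
  have h3 : Measurable fun T : ℝ => (((⌊Real.logb 2 T - 1 + lam⌋ : ℤ) : ℝ) - lam) :=
    ((measurable_of_countable _).comp h.floor).sub measurable_const
  have he : ell lam = fun T =>
      Real.exp (Real.log 2 * (((⌊Real.logb 2 T - 1 + lam⌋ : ℤ) : ℝ) - lam)) :=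
    funext fun T => Real.rpow_def_of_pos (by norm_num) _
  rw [he]
  exact Real.measurable_exp.comp (h3.const_mul _)

lemma geom_lemma (n : ℕ) (hn : 0 < n) :
    ∑ k ∈ range n, (2:ℝ) ^ (-(((k:ℝ)+1)/(n:ℝ))) = 1 / (2 * ((2:ℝ) ^ (1/(n:ℝ)) - 1)) := by
  set s : ℝ := (2:ℝ) ^ (1/(n:ℝ)) with hs
  have hn' : (0:ℝ) < n := by exact_mod_cast hn
  have hs1 : 1 < s := by
    rw [hs]
    exact Real.one_lt_rpow_iff_of_pos (by norm_num) |>.mpr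
      (Or.inl ⟨one_lt_two, div_pos one_pos hn'⟩)
  set r : ℝ := (2:ℝ) ^ (-(1/(n:ℝ))) with hr
  have hrs : r = s⁻¹ := by rw [hr, hs, Real.rpow_neg (by norm_num)]
  have hterm : ∀ k : ℕ, (2:ℝ) ^ (-(((k:ℝ)+1)/(n:ℝ))) = r ^ (k+1) := by
    intro k
    rw [hr, ← Real.rpow_natCast ((2:ℝ) ^ (-(1/(n:ℝ)))) (k+1), ← Real.rpow_mul (by norm_num)]
    congr 1
    push_cast
    ring
  have hr1 : r < 1 := by
    rw [hrs, inv_lt_one_iff₀]; right; exact hs1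
  have hsum : ∑ k ∈ range n, (2:ℝ) ^ (-(((k:ℝ)+1)/(n:ℝ))) = (∑ k ∈ range n, r ^ k) * r := by
    rw [Finset.sum_mul]
    exact Finset.sum_congr rfl fun k _ => by rw [hterm k, pow_succ]
  have hrn : r ^ n = 2⁻¹ := by
    rw [hr, ← Real.rpow_natCast ((2:ℝ) ^ (-(1/(n:ℝ)))) n, ← Real.rpow_mul (by norm_num)]
    rw [show -(1/(n:ℝ)) * n = -1 by field_simp]
    rw [Real.rpow_neg_one]
  rw [hsum, geom_sum_eq (ne_of_lt hr1) n, hrn, hrs]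
  have hs0 : s ≠ 0 := by positivity
  have : s⁻¹ - 1 ≠ 0 := by
    intro h
    have : s⁻¹ = 1 := by linarith
    rw [inv_eq_one] at this; linarith
  rw [div_mul_eq_mul_div, div_eq_div_iff this (by nlinarith : (2 * (s - 1)) ≠ 0)]
  field_simp
  ring

lemma key_sum (n : ℕ) (hn : 0 < n) (z : ℝ) (hz : 0 < z) :
    (z/2) * ∑ k ∈ range n, (2:ℝ) ^ (-(((k:ℝ)+1)/(n:ℝ)))
      ≤ ∑ j ∈ range n, ell ((j:ℝ)/(n:ℝ)) z := by
  have hn' : (0:ℝ) < n := by exact_mod_cast hn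
  set x : ℝ := Real.logb 2 z - 1 with hx
  have hell : ∀ j : ℕ, ell ((j:ℝ)/(n:ℝ)) z
      = (z/2) * (2:ℝ) ^ (-(Int.fract (x + (j:ℝ)/(n:ℝ)))) := by
    intro j
    have h1 : ((⌊x + (j:ℝ)/(n:ℝ)⌋ : ℤ) : ℝ) - (j:ℝ)/(n:ℝ)
        = x - Int.fract (x + (j:ℝ)/(n:ℝ)) := by rw [Int.fract]; ring
    rw [ell, show Real.logb 2 z - 1 + (j:ℝ)/(n:ℝ) = x + (j:ℝ)/(n:ℝ) from rfl, h1,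
      hx, sub_eq_add_neg, sub_eq_add_neg, add_assoc,
      Real.rpow_add (by norm_num : (0:ℝ) < 2),
      Real.rpow_logb (by norm_num) (by norm_num) hz,
      Real.rpow_add (by norm_num : (0:ℝ) < 2), Real.rpow_neg_one]
    ring
  set F : ℕ → ℤ := fun j => ⌊(n:ℝ) * Int.fract (x + (j:ℝ)/(n:ℝ))⌋ with hF
  have hF0 : ∀ j, 0 ≤ F j := fun j =>
    Int.floor_nonneg.mpr (mul_nonneg (le_of_lt hn') (Int.fract_nonneg _))
  have hFn : ∀ j, F j < n := by
    intro j
    rw [hF]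
    apply Int.floor_lt.mpr
    push_cast
    calc (n:ℝ) * Int.fract (x + (j:ℝ)/(n:ℝ)) < n * 1 :=
      mul_lt_mul_of_pos_left (Int.fract_lt_one _) hn'
    _ = n := mul_one _
  have hfr : ∀ j : ℕ, Int.fract (x + (j:ℝ)/(n:ℝ)) ≤ ((F j : ℝ) + 1) / n := by
    intro j
    rw [le_div_iff₀ hn', mul_comm]
    exact le_of_lt (Int.lt_floor_add_one _)
  have hFval : ∀ j : ℕ, F j = ⌊(n:ℝ) * x⌋ + j - n * ⌊x + (j:ℝ)/(n:ℝ)⌋ := by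
    intro j
    have h2 : (n:ℝ) * Int.fract (x + (j:ℝ)/(n:ℝ))
        = ((n:ℝ) * x + (j:ℕ)) - ((n * ⌊x + (j:ℝ)/(n:ℝ)⌋ : ℤ) : ℝ) := by
      rw [Int.fract]
      push_cast
      field_simp
    rw [hF]
    simp only [h2, Int.floor_sub_intCast, Int.floor_add_natCast]
  have hinj : Set.InjOn (fun j => (F j).toNat) (range n) := by
    intro a ha b hb hab
    simp only at hab
    have h1 : F a = F b := by
      have := congrArg (fun t : ℕ => (t : ℤ)) hab
      simpa [Int.toNat_of_nonneg (hF0 a), Int.toNat_of_nonneg (hF0 b)] using this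
    rw [hFval a, hFval b] at h1
    have ha' : a < n := mem_range.mp ha
    have hb' : b < n := mem_range.mp hb
    have h2 : (a : ℤ) - b = n * (⌊x + (a:ℝ)/(n:ℝ)⌋ - ⌊x + (b:ℝ)/(n:ℝ)⌋) := by linarith [h1]
    set c : ℤ := ⌊x + (a:ℝ)/(n:ℝ)⌋ - ⌊x + (b:ℝ)/(n:ℝ)⌋ with hc
    have hb1 : (a : ℤ) - b < n := by omega
    have hb2 : -(n:ℤ) < (a:ℤ) - b := by omega
    have hc0 : c = 0 := by
      rcases lt_trichotomy c 0 with h | h | h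
      · exfalso; nlinarith [h2]
      · exact h
      · exfalso; nlinarith [h2]
    have h3 : (a:ℤ) - b = 0 := by rw [h2, hc0, mul_zero]
    omega
  have hsub : (range n).image (fun j => (F j).toNat) ⊆ range n := by
    intro k hk
    rw [mem_image] at hk
    obtain ⟨j, _, rfl⟩ := hk
    rw [mem_range]
    have := hFn j
    omega
  have himg : (range n).image (fun j => (F j).toNat) = range n := by
    apply Finset.eq_of_subset_of_card_le hsub
    rw [Finset.card_image_of_injOn hinj]
  rw [Finset.mul_sum]
  have hrw : ∑ k ∈ range n, (z/2) * (2:ℝ) ^ (-(((k:ℝ)+1)/(n:ℝ)))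
      = ∑ j ∈ range n, (z/2) * (2:ℝ) ^ (-((((F j).toNat:ℝ)+1)/(n:ℝ))) := by
    conv_lhs => rw [← himg]
    exact Finset.sum_image fun a ha b hb => hinj ha hb
  rw [hrw]
  apply Finset.sum_le_sum
  intro j _
  rw [hell j]
  apply mul_le_mul_of_nonneg_left _ (by positivity)
  apply Real.rpow_le_rpow_left_iff (by norm_num : (1:ℝ) < 2) |>.mpr
  rw [neg_le_neg_iff]
  have hcast : (((F j).toNat : ℝ)) = ((F j : ℤ) : ℝ) := by
    exact_mod_cast congrArg (fun t : ℤ => (t:ℝ)) (Int.toNat_of_nonneg (hF0 j))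
  rw [hcast]
  exact hfr j

/-- For every `n ≥ 1` and every probability distribution `μ` on `(0,∞)` (with finite
expectation), at least one of the `n` schedules `X_j = (2^{i-j/n})_{i∈ℤ}` has
consistency `E_{z∼μ}[z] / E_{z∼μ}[ℓ(X_j,z)]` at most `4n(2^{1/n}-1)`. -/
theorem stmt_16 (n : ℕ) (hn : 0 < n) (μ : Measure ℝ) [IsProbabilityMeasure μ]
    (hsupp : μ (Set.Iic 0) = 0) (hint : Integrable (fun z : ℝ => z) μ) :
    ∃ j < n,
      (∫ z, z ∂μ) / (∫ z, ell ((j : ℝ) / (n : ℝ)) z ∂μ)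
        ≤ 4 * (n : ℝ) * ((2 : ℝ) ^ (1 / (n : ℝ)) - 1) := by
  have hn' : (0:ℝ) < n := by exact_mod_cast hn
  set s : ℝ := (2:ℝ) ^ (1/(n:ℝ)) with hs
  have hs1 : 1 < s := by
    rw [hs]
    exact Real.one_lt_rpow_iff_of_pos (by norm_num) |>.mpr
      (Or.inl ⟨one_lt_two, div_pos one_pos hn'⟩)
  have hc : (0:ℝ) < 4 * n * (s - 1) :=
    mul_pos (mul_pos (by norm_num) hn') (by linarith)
  have hc' : (0:ℝ) < 4 * (s - 1) := by nlinarith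
  have hae : ∀ᵐ z ∂μ, 0 < z := by
    rw [ae_iff]
    rw [show {z : ℝ | ¬ 0 < z} = Set.Iic 0 from by ext t; simp]
    exact hsupp
  have hellint : ∀ lam : ℝ, Integrable (fun z => ell lam z) μ := by
    intro lam
    apply Integrable.mono' (hint.abs.div_const 2) (ell_meas lam).aestronglyMeasurable
    filter_upwards [hae] with z hz
    rw [ell_eq lam z hz, Real.norm_eq_abs, abs_of_nonneg (by positivity)]
    have h1 : (2:ℝ) ^ (-(Int.fract (Real.logb 2 z - 1 + lam))) ≤ 1 :=
      Real.rpow_le_one_of_one_le_of_nonpos one_le_two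
        (neg_nonpos.mpr (Int.fract_nonneg _))
    calc z / 2 * (2:ℝ) ^ (-(Int.fract (Real.logb 2 z - 1 + lam)))
        ≤ z / 2 * 1 := mul_le_mul_of_nonneg_left h1 (by positivity)
      _ = z / 2 := mul_one _
      _ ≤ |z| / 2 := by gcongr; exact le_abs_self z
  have hEpos : 0 < ∫ z, z ∂μ := by
    rw [integral_pos_iff_support_of_nonneg_ae (hae.mono fun z hz => hz.le) hint]
    have hsup : Function.support (fun z : ℝ => z) = {(0:ℝ)}ᶜ := by
      ext t; simp [Function.support]
    rw [hsup, measure_compl (measurableSet_singleton _) (measure_ne_top _ _),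
      measure_mono_null (by simp : {(0:ℝ)} ⊆ Set.Iic 0) hsupp, measure_univ]
    norm_num
  have hgeo := geom_lemma n hn
  rw [← hs] at hgeo
  have hptw : ∀ᵐ z ∂μ, z / (4 * (s - 1)) ≤ ∑ j ∈ range n, ell ((j:ℝ)/(n:ℝ)) z := by
    filter_upwards [hae] with z hz
    have hk := key_sum n hn z hz
    rw [hgeo] at hk
    calc z / (4 * (s - 1)) = (z/2) * (1 / (2 * (s - 1))) := by
          rw [div_mul_div_comm, mul_one]; congr 1; ring
      _ ≤ _ := hk
  have hintsum : Integrable (fun z => ∑ j ∈ range n, ell ((j:ℝ)/(n:ℝ)) z) μ :=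
    integrable_finset_sum _ fun j _ => hellint _
  have hI : (∫ z, z ∂μ) / (4 * (s - 1))
      ≤ ∑ j ∈ range n, ∫ z, ell ((j:ℝ)/(n:ℝ)) z ∂μ := by
    have h1 : ∫ z, z / (4 * (s - 1)) ∂μ
        ≤ ∫ z, (∑ j ∈ range n, ell ((j:ℝ)/(n:ℝ)) z) ∂μ :=
      integral_mono_ae (hint.div_const _) hintsum hptw
    rw [integral_finset_sum _ fun j _ => hellint _, integral_div] at h1
    exact h1
  have hconst : ∑ _j ∈ range n, ((∫ z, z ∂μ) / (4 * n * (s - 1)))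
      ≤ ∑ j ∈ range n, ∫ z, ell ((j:ℝ)/(n:ℝ)) z ∂μ := by
    rw [Finset.sum_const, card_range, nsmul_eq_mul]
    calc (n:ℝ) * ((∫ z, z ∂μ) / (4 * n * (s - 1)))
        = (∫ z, z ∂μ) / (4 * (s - 1)) := by
          field_simp
      _ ≤ _ := hI
  obtain ⟨j, hj, hjle⟩ := Finset.exists_le_of_sum_le ⟨0, mem_range.mpr hn⟩ hconst
  refine ⟨j, mem_range.mp hj, ?_⟩
  have hEj : 0 < ∫ z, ell ((j:ℝ)/(n:ℝ)) z ∂μ :=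
    lt_of_lt_of_le (div_pos hEpos hc) hjle
  rw [div_le_iff₀ hEj]
  rw [div_le_iff₀ hc] at hjle
  linarith
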